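/- Let channel sequences U_n : Xⁿ ⇝ Y_n and V_n = f_n(U_n) be given with Φ_n = log₂ max_z |f_n⁻¹(z)| ∈ o(n). If the mutual information capacity I(U) = lim I(U_n)/n exists, then I(V) exists and I(U) = I(V). -/

import Mathlib

open Filter Asymptotics

/-- Output distribution `p•W`. -/
noncomputable def outDist {X Y : Type*} (W : X → Y → ℝ) (p : X → ℝ) (y : Y) : ℝ :=
  ∑' x, p x * W x y

/-- Mutual information density `i(W,p,x,y)`. -/
noncomputable def iDen {X Y : Type*} (W : X → Y → ℝ) (p : X → ℝ) (x : X) (y : Y) : ℝ :=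
  if W x y = 0 ∨ outDist W p y = 0 then 0
  else Real.logb 2 (W x y / outDist W p y)

/-- Mutual information `I(W,p)`. -/
noncomputable def MI {X Y : Type*} (W : X → Y → ℝ) (p : X → ℝ) : ℝ :=
  ∑' xy : X × Y, p xy.1 * W xy.1 xy.2 * iDen W p xy.1 xy.2

/-- The mutual information capacity `I(W) = max_p I(W,p)`. -/
noncomputable def iCap {X Y : Type*} [Fintype X] (W : X → Y → ℝ) : ℝ :=
  ⨆ p : {p : X → ℝ // (∀ x, 0 ≤ p x) ∧ ∑ x, p x = 1}, MI W p.1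

/-- The degraded channel `f(W)`. -/
noncomputable def degrade {X Y Z : Type*} (W : X → Y → ℝ) (f : Y → Z) (x : X) (z : Z) : ℝ :=
  ∑' y : (f ⁻¹' {z}), W x y


private lemma mylog_le {a b : ℝ} (ha : 0 ≤ a) (hb : 0 ≤ b) : a * Real.log (b / a) ≤ b := by
  rcases eq_or_lt_of_le ha with h | ha
  · simp [← h]; exact hb
  rcases eq_or_lt_of_le hb with h | hb
  · simp [← h, ha.le]
  have h1 : Real.log (b / a) ≤ b / a - 1 := Real.log_le_sub_one_of_pos (by positivity)
  have h2 : a * Real.log (b / a) ≤ a * (b / a - 1) := by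
    exact mul_le_mul_of_nonneg_left h1 ha.le
  have h3 : a * (b / a - 1) = b - a := by field_simp
  nlinarith

private lemma mylog_ge {a b : ℝ} (ha : 0 ≤ a) (hb : 0 < b) : a - b ≤ a * Real.log (a / b) := by
  rcases eq_or_lt_of_le ha with h | ha
  · simp [← h, hb.le]
  have h1 : Real.log (b / a) ≤ b / a - 1 := Real.log_le_sub_one_of_pos (by positivity)
  have h2 : Real.log (a / b) = - Real.log (b / a) := by
    rw [← Real.log_inv]; congr 1; field_simp
  have h3 : a * Real.log (a / b) ≥ a * (1 - b / a) := by
    rw [h2]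
    nlinarith
  have h4 : a * (1 - b / a) = a - b := by field_simp
  nlinarith

private lemma fiber_logsum {Y : Type*} (s : Finset Y) (a : Y → ℝ) (ha : ∀ y ∈ s, 0 ≤ a y)
    (c : ℝ) (hc : 0 ≤ c) :
    ∑ y ∈ s, a y * Real.log (c / a y) ≤ (∑ y ∈ s, a y) * Real.log s.card + c := by
  rcases s.eq_empty_or_nonempty with rfl | hs
  · simpa using hc
  have hN : (1 : ℝ) ≤ s.card := by exact_mod_cast hs.card_pos
  have hN0 : (0:ℝ) < s.card := by linarith
  have key : ∀ y ∈ s, a y * Real.log (c / a y) ≤ a y * Real.log s.card + c / s.card := by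
    intro y hy
    have hay := ha y hy
    rcases eq_or_lt_of_le hay with h | hay
    · simp [← h]; positivity
    rcases eq_or_lt_of_le hc with h | hc
    · simp [← h]; positivity
    have harg : c / a y = (s.card : ℝ) * ((c / s.card) / a y) := by field_simp
    have hlog : Real.log (c / a y) = Real.log s.card + Real.log ((c / s.card) / a y) := by
      rw [harg, Real.log_mul (by positivity) (by positivity)]
    calc a y * Real.log (c / a y)
        = a y * Real.log s.card + a y * Real.log ((c / s.card) / a y) := by rw [hlog]; ring
      _ ≤ a y * Real.log s.card + c / s.card := by
          have := mylog_le hay.le (show (0:ℝ) ≤ c / s.card by positivity)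
          linarith
  calc ∑ y ∈ s, a y * Real.log (c / a y)
      ≤ ∑ y ∈ s, (a y * Real.log s.card + c / s.card) := Finset.sum_le_sum key
    _ = (∑ y ∈ s, a y) * Real.log s.card + s.card * (c / s.card) := by
        rw [Finset.sum_add_distrib, ← Finset.sum_mul, Finset.sum_const, nsmul_eq_mul]
    _ = (∑ y ∈ s, a y) * Real.log s.card + c := by
        congr 1; field_simp

section fiber
variable {Y Z : Type*} {f : Y → Z}

private lemma tsum_fiber_subtype (hf : ∀ z, (f ⁻¹' {z}).Finite) (g : Y → ℝ) (z : Z) :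
    ∑' (c : ↥(f ⁻¹' {z})), g ↑c = ∑ y ∈ (hf z).toFinset, g y := by
  haveI := (hf z).fintype
  rw [tsum_fintype, ← Finset.sum_coe_sort ((hf z).toFinset) g]
  exact Fintype.sum_equiv (Equiv.subtypeEquivRight (fun y => ((hf z).mem_toFinset).symm)) _ _
    (fun c => rfl)

private lemma tsum_fiber_eq (hf : ∀ z, (f ⁻¹' {z}).Finite) (g : Y → ℝ) (hg : Summable g) :
    ∑' y, g y = ∑' z, ∑ y ∈ (hf z).toFinset, g y := by
  have hs : Summable (fun s : (b : Z) × ↑(f ⁻¹' {b}) => g ((Equiv.sigmaPreimageEquiv f) s)) :=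
    ((Equiv.sigmaPreimageEquiv f).summable_iff).mpr hg
  rw [← (Equiv.sigmaPreimageEquiv f).tsum_eq g, Summable.tsum_sigma hs]
  refine tsum_congr fun z => ?_
  exact tsum_fiber_subtype hf g z

private lemma summable_fiber_sums (hf : ∀ z, (f ⁻¹' {z}).Finite) (g : Y → ℝ)
    (hg0 : ∀ y, 0 ≤ g y) (hg : Summable g) :
    Summable (fun z => ∑ y ∈ (hf z).toFinset, g y) := by
  have h := ((summable_sigma_of_nonneg
      (f := fun s : Σ z, ↥(f ⁻¹' {z}) => g ((Equiv.sigmaPreimageEquiv f) s))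
      (fun s => hg0 _)).mp (((Equiv.sigmaPreimageEquiv f).summable_iff).mpr hg)).2
  refine h.congr fun z => ?_
  exact tsum_fiber_subtype hf g z

private lemma summable_of_fiber (hf : ∀ z, (f ⁻¹' {z}).Finite) (g : Y → ℝ)
    (hg0 : ∀ y, 0 ≤ g y) (u : Z → ℝ) (hu : Summable u)
    (hb : ∀ z, ∑ y ∈ (hf z).toFinset, g y ≤ u z) : Summable g := by
  apply ((Equiv.sigmaPreimageEquiv f).summable_iff).mp
  apply (summable_sigma_of_nonneg (fun s => hg0 _)).mpr
  constructor
  · intro z; haveI := (hf z).fintype; exact Summable.of_finite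
  · apply Summable.of_nonneg_of_le (fun z => ?_) (fun z => ?_) hu
    · exact tsum_nonneg fun y => hg0 _
    · have e1 : ∑' (y : ↑(f ⁻¹' {z})), g ((Equiv.sigmaPreimageEquiv f) ⟨z, y⟩)
          = ∑ y ∈ (hf z).toFinset, g y := tsum_fiber_subtype hf g z
      rw [e1]; exact hb z

end fiber

section chan
variable {X Y : Type*} [Fintype X]

private lemma outDist_hasSum (W : X → Y → ℝ) (p : X → ℝ)
    (hW1 : ∀ x, HasSum (W x) 1) (hp1 : ∑ x, p x = 1) : HasSum (outDist W p) 1 := by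
  have h : HasSum (fun y => ∑ x, p x * W x y) (∑ x, p x * 1) :=
    hasSum_sum (fun x _ => (hW1 x).mul_left (p x))
  have he : outDist W p = fun y => ∑ x, p x * W x y := funext fun y => tsum_fintype _
  rw [he]
  simpa [hp1] using h

private lemma MI_pieces (W : X → Y → ℝ) (p : X → ℝ)
    (hW0 : ∀ x y, 0 ≤ W x y) (hW1 : ∀ x, HasSum (W x) 1)
    (hp0 : ∀ x, 0 ≤ p x) (hp1 : ∑ x, p x = 1) :
    (∀ x, Summable (fun y => p x * W x y * iDen W p x y)) ∧
    MI W p = ∑ x, ∑' y, p x * W x y * iDen W p x y ∧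
    MI W p ≤ (Fintype.card X) * (2 / Real.log 2) := by
  have hlog2 : 0 < Real.log 2 := Real.log_pos one_lt_two
  have hpx1 : ∀ x, p x ≤ 1 := fun x =>
    hp1 ▸ Finset.single_le_sum (fun i _ => hp0 i) (Finset.mem_univ x)
  have hq_eq : ∀ y, outDist W p y = ∑ x, p x * W x y := fun y => tsum_fintype _
  have hq0 : ∀ y, 0 ≤ outDist W p y := fun y =>
    (hq_eq y) ▸ Finset.sum_nonneg fun x _ => mul_nonneg (hp0 x) (hW0 x y)
  have hqW : ∀ x y, p x * W x y ≤ outDist W p y := fun x y =>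
    (hq_eq y) ▸ Finset.single_le_sum (fun i _ => mul_nonneg (hp0 i) (hW0 i y)) (Finset.mem_univ x)
  have hq1 : HasSum (outDist W p) 1 := outDist_hasSum W p hW1 hp1
  have hqsummable := hq1.summable
  have hlogbpx : ∀ x, 0 ≤ Real.logb 2 (p x)⁻¹ := by
    intro x
    rcases eq_or_lt_of_le (hp0 x) with h | h
    · simp [← h]
    · exact Real.logb_nonneg one_lt_two (one_le_inv_iff₀.mpr ⟨h, hpx1 x⟩)
  have hFabs : ∀ x y, |p x * W x y * iDen W p x y| ≤
      Real.logb 2 (p x)⁻¹ * (p x * W x y) + (p x / Real.log 2) * outDist W p y := by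
    intro x y
    have hrhs0 : 0 ≤ Real.logb 2 (p x)⁻¹ * (p x * W x y) + (p x / Real.log 2) * outDist W p y := by
      have := hlogbpx x
      have := hq0 y
      have := hp0 x
      have := hW0 x y
      positivity
    by_cases hid : W x y = 0 ∨ outDist W p y = 0
    · rw [iDen, if_pos hid]
      simpa using hrhs0
    · push_neg at hid
      have hWpos : 0 < W x y := lt_of_le_of_ne (hW0 x y) (Ne.symm hid.1)
      have hqpos : 0 < outDist W p y := lt_of_le_of_ne (hq0 y) (Ne.symm hid.2)
      rw [iDen, if_neg (by push_neg; exact hid)]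
      rcases eq_or_lt_of_le (hp0 x) with hpx | hpx
      · simp [← hpx]
      -- upper bound
      have h5 : W x y / outDist W p y ≤ (p x)⁻¹ := by
        rw [div_le_iff₀ hqpos]
        calc W x y = (p x)⁻¹ * (p x * W x y) := by field_simp
          _ ≤ (p x)⁻¹ * outDist W p y := by
              exact mul_le_mul_of_nonneg_left (hqW x y) (by positivity)
      have hup : p x * W x y * Real.logb 2 (W x y / outDist W p y) ≤
          Real.logb 2 (p x)⁻¹ * (p x * W x y) := by
        have hmono := (Real.logb_le_logb one_lt_two (div_pos hWpos hqpos) (by positivity)).mpr h5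
        have := mul_le_mul_of_nonneg_left hmono
          (show 0 ≤ p x * W x y from mul_nonneg (hp0 x) (hW0 x y))
        linarith [this]
      -- lower bound
      have hlow : -(p x * W x y * Real.logb 2 (W x y / outDist W p y)) ≤
          (p x / Real.log 2) * outDist W p y := by
        have hinv : Real.logb 2 (W x y / outDist W p y) =
            -Real.logb 2 (outDist W p y / W x y) := by
          rw [← Real.logb_inv]
          congr 1
          field_simp
        have hml : W x y * Real.log (outDist W p y / W x y) ≤ outDist W p y :=
          mylog_le (hW0 x y) (hq0 y)
        have : Real.logb 2 (outDist W p y / W x y) =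
            Real.log (outDist W p y / W x y) / Real.log 2 := by rw [Real.logb]
        rw [hinv, this]
        have h7 : p x * (W x y * Real.log (outDist W p y / W x y)) ≤ p x * outDist W p y :=
          mul_le_mul_of_nonneg_left hml (hp0 x)
        calc -(p x * W x y * -(Real.log (outDist W p y / W x y) / Real.log 2))
            = (p x * (W x y * Real.log (outDist W p y / W x y))) / Real.log 2 := by ring
          _ ≤ (p x * outDist W p y) / Real.log 2 := by
              exact div_le_div_of_nonneg_right h7 hlog2.le
          _ = (p x / Real.log 2) * outDist W p y := by ring
      rw [abs_le]
      constructor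
      · have : 0 ≤ Real.logb 2 (p x)⁻¹ * (p x * W x y) :=
          mul_nonneg (hlogbpx x) (mul_nonneg (hp0 x) (hW0 x y))
        linarith
      · have : 0 ≤ (p x / Real.log 2) * outDist W p y :=
          mul_nonneg (by positivity) (hq0 y)
        linarith
  have hdomsum : ∀ x, Summable (fun y =>
      Real.logb 2 (p x)⁻¹ * (p x * W x y) + (p x / Real.log 2) * outDist W p y) := fun x =>
    (((hW1 x).summable.mul_left (p x)).mul_left _).add (hqsummable.mul_left _)
  have hFsum : ∀ x, Summable (fun y => p x * W x y * iDen W p x y) := fun x =>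
    Summable.of_abs (Summable.of_nonneg_of_le (fun y => abs_nonneg _) (hFabs x) (hdomsum x))
  have hprod : Summable (fun xy : X × Y => p xy.1 * W xy.1 xy.2 * iDen W p xy.1 xy.2) := by
    apply Summable.of_abs
    exact (summable_prod_of_nonneg (fun _ => abs_nonneg _)).mpr
      ⟨fun x => (hFsum x).abs, Summable.of_finite⟩
  have hMI_eq : MI W p = ∑ x, ∑' y, p x * W x y * iDen W p x y := by
    rw [MI, Summable.tsum_prod' hprod (fun x => hFsum x), tsum_fintype]
  refine ⟨hFsum, hMI_eq, ?_⟩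
  rw [hMI_eq]
  have hbd : ∀ x, ∑' y, p x * W x y * iDen W p x y ≤ 2 / Real.log 2 := by
    intro x
    have h1 : ∑' y, p x * W x y * iDen W p x y ≤ ∑' y,
        (Real.logb 2 (p x)⁻¹ * (p x * W x y) + (p x / Real.log 2) * outDist W p y) :=
      Summable.tsum_le_tsum (fun y => le_trans (le_abs_self _) (hFabs x y)) (hFsum x) (hdomsum x)
    have h2 : ∑' y, (Real.logb 2 (p x)⁻¹ * (p x * W x y) + (p x / Real.log 2) * outDist W p y)
        = Real.logb 2 (p x)⁻¹ * (p x * 1) + (p x / Real.log 2) * 1 := by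
      rw [Summable.tsum_add (((hW1 x).summable.mul_left (p x)).mul_left _) (hqsummable.mul_left _),
        tsum_mul_left, tsum_mul_left, tsum_mul_left, (hW1 x).tsum_eq, hq1.tsum_eq]
    have h3 : Real.logb 2 (p x)⁻¹ * (p x * 1) ≤ 1 / Real.log 2 := by
      have : p x * Real.log (1 / p x) ≤ 1 := mylog_le (hp0 x) zero_le_one
      have heq : Real.logb 2 (p x)⁻¹ * (p x * 1) = (p x * Real.log (1 / p x)) / Real.log 2 := by
        rw [Real.logb, one_div]
        ring
      rw [heq]
      exact div_le_div_of_nonneg_right this hlog2.le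
    have h4 : (p x / Real.log 2) * 1 ≤ 1 / Real.log 2 := by
      rw [mul_one]
      exact div_le_div_of_nonneg_right (hpx1 x) hlog2.le
    have h6 : 2 / Real.log 2 = 1 / Real.log 2 + 1 / Real.log 2 := by ring
    linarith
  calc ∑ x, ∑' y, p x * W x y * iDen W p x y ≤ ∑ _x : X, (2 / Real.log 2) :=
        Finset.sum_le_sum fun x _ => hbd x
    _ = (Fintype.card X) * (2 / Real.log 2) := by
        rw [Finset.sum_const, nsmul_eq_mul, Finset.card_univ]

end chan
section deg
variable {X Y Z : Type*} [Fintype X]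

private lemma degrade_bounds (W : X → Y → ℝ) (f : Y → Z) (Φ : ℝ)
    (hW0 : ∀ x y, 0 ≤ W x y) (hW1 : ∀ x, HasSum (W x) 1)
    (hfib : ∀ z, (f ⁻¹' {z}).Finite ∧ (((f ⁻¹' {z}).ncard : ℝ)) ≤ 2 ^ Φ)
    (hΦ0 : 0 ≤ Φ)
    (p : X → ℝ) (hp0 : ∀ x, 0 ≤ p x) (hp1 : ∑ x, p x = 1) :
    MI (degrade W f) p ≤ MI W p ∧
    MI W p ≤ MI (degrade W f) p + (Φ + 1 / Real.log 2) := by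
  classical
  have hf : ∀ z, (f ⁻¹' {z}).Finite := fun z => (hfib z).1
  have hlog2 : 0 < Real.log 2 := Real.log_pos one_lt_two
  have hpx1 : ∀ x, p x ≤ 1 := fun x =>
    hp1 ▸ Finset.single_le_sum (fun i _ => hp0 i) (Finset.mem_univ x)
  set V : X → Z → ℝ := degrade W f with hVdef
  -- basic facts about V
  have hV_eq : ∀ x z, V x z = ∑ y ∈ (hf z).toFinset, W x y := by
    intro x z
    rw [hVdef]
    exact tsum_fiber_subtype hf (W x) z
  have hV0 : ∀ x z, 0 ≤ V x z := fun x z =>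
    (hV_eq x z) ▸ Finset.sum_nonneg fun y _ => hW0 x y
  have hmemT : ∀ z y, y ∈ (hf z).toFinset ↔ f y = z := by
    intro z y
    rw [Set.Finite.mem_toFinset]
    exact Iff.rfl
  have hWV : ∀ x y, W x y ≤ V x (f y) := by
    intro x y
    rw [hV_eq]
    exact Finset.single_le_sum (fun i _ => hW0 x i) ((hmemT (f y) y).mpr rfl)
  have hV1 : ∀ x, HasSum (V x) 1 := by
    intro x
    apply HasSum.sigma ((Equiv.sigmaPreimageEquiv f).hasSum_iff.mpr (hW1 x))
    intro z
    haveI := (hf z).fintype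
    have h := hasSum_fintype (fun c : ↥(f ⁻¹' {z}) => W x ↑c)
    have he : V x z = ∑ c : ↥(f ⁻¹' {z}), W x ↑c := by
      rw [hVdef]
      exact tsum_fintype _
    rw [he]
    exact h
  -- facts about q = outDist W p and r = outDist V p
  have hq_eq : ∀ y, outDist W p y = ∑ x, p x * W x y := fun y => tsum_fintype _
  have hq0 : ∀ y, 0 ≤ outDist W p y := fun y =>
    (hq_eq y) ▸ Finset.sum_nonneg fun x _ => mul_nonneg (hp0 x) (hW0 x y)
  have hqW : ∀ x y, p x * W x y ≤ outDist W p y := fun x y =>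
    (hq_eq y) ▸ Finset.single_le_sum (fun i _ => mul_nonneg (hp0 i) (hW0 i y)) (Finset.mem_univ x)
  have hq1 : HasSum (outDist W p) 1 := outDist_hasSum W p hW1 hp1
  have hr_eq : ∀ z, outDist V p z = ∑ x, p x * V x z := fun z => tsum_fintype _
  have hr0 : ∀ z, 0 ≤ outDist V p z := fun z =>
    (hr_eq z) ▸ Finset.sum_nonneg fun x _ => mul_nonneg (hp0 x) (hV0 x z)
  have hrV : ∀ x z, p x * V x z ≤ outDist V p z := fun x z =>
    (hr_eq z) ▸ Finset.single_le_sum (fun i _ => mul_nonneg (hp0 i) (hV0 i z)) (Finset.mem_univ x)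
  have hr1 : HasSum (outDist V p) 1 := outDist_hasSum V p hV1 hp1
  have hqr_fiber : ∀ z, ∑ y ∈ (hf z).toFinset, outDist W p y = outDist V p z := by
    intro z
    rw [hr_eq z]
    calc ∑ y ∈ (hf z).toFinset, outDist W p y
        = ∑ y ∈ (hf z).toFinset, ∑ x, p x * W x y := Finset.sum_congr rfl fun y _ => hq_eq y
      _ = ∑ x, ∑ y ∈ (hf z).toFinset, p x * W x y := Finset.sum_comm
      _ = ∑ x, p x * V x z := by
          refine Finset.sum_congr rfl fun x _ => ?_
          rw [← Finset.mul_sum, hV_eq]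
  have hqr : ∀ y, outDist W p y ≤ outDist V p (f y) := by
    intro y
    rw [← hqr_fiber (f y)]
    exact Finset.single_le_sum (fun i _ => hq0 i) ((hmemT (f y) y).mpr rfl)
  -- key helper
  have key_helper : ∀ (a : Y → ℝ) (c S : Z → ℝ), (∀ y, 0 ≤ a y) → (∀ z, 0 ≤ c z) →
      Summable c → Summable S → (∀ z, ∑ y ∈ (hf z).toFinset, a y = S z) →
      (∀ y, a y ≤ c (f y)) →
      Summable (fun y => a y * Real.logb 2 (c (f y) / a y)) ∧
      ∑' y, a y * Real.logb 2 (c (f y) / a y) ≤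
        ((∑' z, S z) * (Φ * Real.log 2) + ∑' z, c z) / Real.log 2 := by
    intro a c S ha0 hc0 hcs hSs hS hac
    have hnn : ∀ y, 0 ≤ a y * Real.logb 2 (c (f y) / a y) := by
      intro y
      rcases eq_or_lt_of_le (ha0 y) with h | h
      · simp [← h]
      · exact mul_nonneg h.le
          (Real.logb_nonneg one_lt_two ((one_le_div h).mpr (hac y)))
    have hSnn : ∀ z, 0 ≤ S z := fun z => (hS z) ▸ Finset.sum_nonneg fun y _ => ha0 y
    have husum : Summable (fun z => (S z * (Φ * Real.log 2) + c z) / Real.log 2) :=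
      ((hSs.mul_right _).add hcs).div_const _
    have hfb : ∀ z, ∑ y ∈ (hf z).toFinset, a y * Real.logb 2 (c (f y) / a y) ≤
        (S z * (Φ * Real.log 2) + c z) / Real.log 2 := by
      intro z
      have e1 : ∑ y ∈ (hf z).toFinset, a y * Real.logb 2 (c (f y) / a y)
          = (∑ y ∈ (hf z).toFinset, a y * Real.log (c z / a y)) / Real.log 2 := by
        rw [Finset.sum_div]
        refine Finset.sum_congr rfl fun y hy => ?_
        rw [(hmemT z y).mp hy, Real.logb]
        ring
      rw [e1]
      apply div_le_div_of_nonneg_right _ hlog2.le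
      have h2 := fiber_logsum ((hf z).toFinset) a (fun y _ => ha0 y) (c z) (hc0 z)
      rw [hS z] at h2
      have hN : Real.log ((hf z).toFinset.card) ≤ Φ * Real.log 2 := by
        rcases Nat.eq_zero_or_pos ((hf z).toFinset.card) with h | h
        · rw [h]
          simp
          positivity
        · have hcard : (((hf z).toFinset.card : ℝ)) ≤ 2 ^ Φ := by
            have h3 := (hfib z).2
            rwa [Set.ncard_eq_toFinset_card (f ⁻¹' {z}) (hf z)] at h3
          calc Real.log ((hf z).toFinset.card) ≤ Real.log (2 ^ Φ) :=
                Real.log_le_log (by exact_mod_cast h) hcard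
            _ = Φ * Real.log 2 := Real.log_rpow two_pos Φ
      nlinarith [mul_le_mul_of_nonneg_left hN (hSnn z)]
    have hsum : Summable (fun y => a y * Real.logb 2 (c (f y) / a y)) :=
      summable_of_fiber hf _ hnn _ husum hfb
    refine ⟨hsum, ?_⟩
    rw [tsum_fiber_eq hf _ hsum]
    calc ∑' z, ∑ y ∈ (hf z).toFinset, a y * Real.logb 2 (c (f y) / a y)
        ≤ ∑' z, (S z * (Φ * Real.log 2) + c z) / Real.log 2 :=
          Summable.tsum_le_tsum hfb (summable_fiber_sums hf _ hnn hsum) husum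
      _ = ((∑' z, S z) * (Φ * Real.log 2) + ∑' z, c z) / Real.log 2 := by
          rw [tsum_div_const, Summable.tsum_add (hSs.mul_right _) hcs, tsum_mul_right]
  -- instantiate
  have haS : ∀ x z, ∑ y ∈ (hf z).toFinset, p x * W x y = p x * V x z := by
    intro x z
    rw [← Finset.mul_sum, hV_eq]
  have hpW0 : ∀ x y, 0 ≤ p x * W x y := fun x y => mul_nonneg (hp0 x) (hW0 x y)
  have hpWV : ∀ x y, p x * W x y ≤ V x (f y) := by
    intro x y
    calc p x * W x y ≤ 1 * W x y :=
          mul_le_mul_of_nonneg_right (hpx1 x) (hW0 x y)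
      _ = W x y := one_mul _
      _ ≤ V x (f y) := hWV x y
  have hP1 : ∀ x, Summable (fun y => p x * W x y * Real.logb 2 (V x (f y) / (p x * W x y))) :=
    fun x => (key_helper (fun y => p x * W x y) (V x) (fun z => p x * V x z)
      (hpW0 x) (hV0 x) (hV1 x).summable ((hV1 x).summable.mul_left _) (haS x) (hpWV x)).1
  have hP2 : ∀ x, Summable (fun y => p x * W x y *
      Real.logb 2 (outDist V p (f y) / (p x * W x y))) :=
    fun x => (key_helper (fun y => p x * W x y) (outDist V p) (fun z => p x * V x z)
      (hpW0 x) hr0 hr1.summable ((hV1 x).summable.mul_left _) (haS x)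
      (fun y => le_trans (hqW x y) (hqr y))).1
  -- F' summability and tsum over fibers
  have hF'eq : ∀ x y, p x * W x y * Real.logb 2 (V x (f y) / outDist V p (f y)) =
      p x * W x y * Real.logb 2 (V x (f y) / (p x * W x y)) -
      p x * W x y * Real.logb 2 (outDist V p (f y) / (p x * W x y)) := by
    intro x y
    by_cases h : p x * W x y = 0
    · rw [h]
      simp
    · have hpw : 0 < p x * W x y := lt_of_le_of_ne (hpW0 x y) (Ne.symm h)
      have hVpos : 0 < V x (f y) := lt_of_lt_of_le hpw (hpWV x y)
      have hrpos : 0 < outDist V p (f y) := lt_of_lt_of_le hpw (le_trans (hqW x y) (hqr y))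
      rw [← mul_sub]
      congr 1
      rw [Real.logb_div (ne_of_gt hVpos) (ne_of_gt hrpos),
        Real.logb_div (ne_of_gt hVpos) h, Real.logb_div (ne_of_gt hrpos) h]
      ring
  have hF'sum : ∀ x, Summable (fun y => p x * W x y *
      Real.logb 2 (V x (f y) / outDist V p (f y))) := fun x =>
    ((hP1 x).sub (hP2 x)).congr (fun y => (hF'eq x y).symm)
  have htsumF' : ∀ x, ∑' y, p x * W x y * Real.logb 2 (V x (f y) / outDist V p (f y)) =
      ∑' z, p x * V x z * iDen V p x z := by
    intro x
    rw [tsum_fiber_eq hf _ (hF'sum x)]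
    refine tsum_congr fun z => ?_
    have e1 : ∑ y ∈ (hf z).toFinset, p x * W x y * Real.logb 2 (V x (f y) / outDist V p (f y))
        = (p x * V x z) * Real.logb 2 (V x z / outDist V p z) := by
      rw [← haS x z, Finset.sum_mul]
      refine Finset.sum_congr rfl fun y hy => ?_
      rw [(hmemT z y).mp hy]
    rw [e1]
    by_cases hVz : V x z = 0
    · simp [hVz, iDen]
    by_cases hrz : outDist V p z = 0
    · have h0 : p x * V x z = 0 :=
        le_antisymm (hrz ▸ hrV x z) (mul_nonneg (hp0 x) (hV0 x z))
      rw [h0, zero_mul, iDen, if_pos (Or.inr hrz), mul_zero]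
    · rw [iDen, if_neg (by push_neg; exact ⟨hVz, hrz⟩)]
  -- lower bound: MI V p ≤ MI W p
  obtain ⟨hFsum, hMIW, _⟩ := MI_pieces W p hW0 hW1 hp0 hp1
  obtain ⟨hGsum, hMIV, _⟩ := MI_pieces V p hV0 hV1 hp0 hp1
  have hbnn : ∀ x y, 0 ≤ V x (f y) * outDist W p y / outDist V p (f y) := fun x y =>
    div_nonneg (mul_nonneg (hV0 x (f y)) (hq0 y)) (hr0 (f y))
  have hbfib : ∀ x z, ∑ y ∈ (hf z).toFinset, V x (f y) * outDist W p y / outDist V p (f y)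
      ≤ V x z := by
    intro x z
    have e1 : ∑ y ∈ (hf z).toFinset, V x (f y) * outDist W p y / outDist V p (f y)
        = (V x z / outDist V p z) * outDist V p z := by
      calc ∑ y ∈ (hf z).toFinset, V x (f y) * outDist W p y / outDist V p (f y)
          = ∑ y ∈ (hf z).toFinset, (V x z / outDist V p z) * outDist W p y := by
            refine Finset.sum_congr rfl fun y hy => ?_
            rw [(hmemT z y).mp hy]
            ring
        _ = (V x z / outDist V p z) * outDist V p z := by
            rw [← Finset.mul_sum, hqr_fiber z]
    rw [e1]
    rcases eq_or_lt_of_le (hr0 z) with h | h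
    · rw [← h, mul_zero]
      exact hV0 x z
    · rw [div_mul_cancel₀ _ (ne_of_gt h)]
  have hbsum : ∀ x, Summable (fun y => V x (f y) * outDist W p y / outDist V p (f y)) :=
    fun x => summable_of_fiber hf _ (hbnn x) (V x) (hV1 x).summable (hbfib x)
  have hbtsum : ∀ x, ∑' y, V x (f y) * outDist W p y / outDist V p (f y) ≤ 1 := by
    intro x
    rw [tsum_fiber_eq hf _ (hbsum x)]
    calc ∑' z, ∑ y ∈ (hf z).toFinset, V x (f y) * outDist W p y / outDist V p (f y)
        ≤ ∑' z, V x z :=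
          Summable.tsum_le_tsum (hbfib x) (summable_fiber_sums hf _ (hbnn x) (hbsum x)) (hV1 x).summable
      _ = 1 := (hV1 x).tsum_eq
  -- pointwise difference formula for active terms
  have hFdiff : ∀ x y, p x ≠ 0 → W x y ≠ 0 →
      p x * W x y * iDen W p x y -
        p x * W x y * Real.logb 2 (V x (f y) / outDist V p (f y)) =
      p x * W x y * Real.logb 2 (W x y /
        (V x (f y) * outDist W p y / outDist V p (f y))) := by
    intro x y hx hw
    have hWpos : 0 < W x y := lt_of_le_of_ne (hW0 x y) (Ne.symm hw)
    have hpw : 0 < p x * W x y := mul_pos (lt_of_le_of_ne (hp0 x) (Ne.symm hx)) hWpos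
    have hqpos : 0 < outDist W p y := lt_of_lt_of_le hpw (hqW x y)
    have hVpos : 0 < V x (f y) := lt_of_lt_of_le hWpos (hWV x y)
    have hrpos : 0 < outDist V p (f y) := lt_of_lt_of_le hqpos (hqr y)
    have hbpos : 0 < V x (f y) * outDist W p y / outDist V p (f y) :=
      div_pos (mul_pos hVpos hqpos) hrpos
    rw [iDen, if_neg (by push_neg; exact ⟨hw, ne_of_gt hqpos⟩), ← mul_sub]
    congr 1
    rw [Real.logb_div (ne_of_gt hWpos) (ne_of_gt hqpos),
      Real.logb_div (ne_of_gt hVpos) (ne_of_gt hrpos),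
      Real.logb_div (ne_of_gt hWpos) (ne_of_gt hbpos),
      Real.logb_div (ne_of_gt (mul_pos hVpos hqpos)) (ne_of_gt hrpos),
      Real.logb_mul (ne_of_gt hVpos) (ne_of_gt hqpos)]
    ring
  have hlow : ∀ x, ∑' z, p x * V x z * iDen V p x z ≤
      ∑' y, p x * W x y * iDen W p x y := by
    intro x
    rw [← htsumF' x]
    have hpt : ∀ y, p x * (W x y - V x (f y) * outDist W p y / outDist V p (f y)) /
        Real.log 2 ≤
        p x * W x y * iDen W p x y -
          p x * W x y * Real.logb 2 (V x (f y) / outDist V p (f y)) := by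
      intro y
      by_cases hx : p x = 0
      · simp [hx]
      by_cases hw : W x y = 0
      · have hb0 := hbnn x y
        have h1 : p x * (W x y - V x (f y) * outDist W p y / outDist V p (f y)) ≤ 0 := by
          rw [hw]
          nlinarith [hp0 x]
        have h2 : p x * W x y * iDen W p x y -
            p x * W x y * Real.logb 2 (V x (f y) / outDist V p (f y)) = 0 := by
          rw [hw]
          ring
        rw [h2]
        exact div_nonpos_of_nonpos_of_nonneg h1 hlog2.le
      · rw [hFdiff x y hx hw]
        have hWpos : 0 < W x y := lt_of_le_of_ne (hW0 x y) (Ne.symm hw)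
        have hpw : 0 < p x * W x y :=
          mul_pos (lt_of_le_of_ne (hp0 x) (Ne.symm hx)) hWpos
        have hqpos : 0 < outDist W p y := lt_of_lt_of_le hpw (hqW x y)
        have hVpos : 0 < V x (f y) := lt_of_lt_of_le hWpos (hWV x y)
        have hrpos : 0 < outDist V p (f y) := lt_of_lt_of_le hqpos (hqr y)
        have hbpos : 0 < V x (f y) * outDist W p y / outDist V p (f y) :=
          div_pos (mul_pos hVpos hqpos) hrpos
        have hkey := mylog_ge (hW0 x y) hbpos
        have h3 : (W x y - V x (f y) * outDist W p y / outDist V p (f y)) / Real.log 2 ≤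
            W x y * Real.logb 2 (W x y /
              (V x (f y) * outDist W p y / outDist V p (f y))) := by
          rw [Real.logb, ← mul_div_assoc]
          exact div_le_div_of_nonneg_right hkey hlog2.le
        calc p x * (W x y - V x (f y) * outDist W p y / outDist V p (f y)) / Real.log 2
            = p x * ((W x y - V x (f y) * outDist W p y / outDist V p (f y)) /
                Real.log 2) := by ring
          _ ≤ p x * (W x y * Real.logb 2 (W x y /
                (V x (f y) * outDist W p y / outDist V p (f y)))) :=
              mul_le_mul_of_nonneg_left h3 (hp0 x)
          _ = p x * W x y * Real.logb 2 (W x y /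
                (V x (f y) * outDist W p y / outDist V p (f y))) := by ring
    have hlhs_sum : Summable (fun y =>
        p x * (W x y - V x (f y) * outDist W p y / outDist V p (f y)) / Real.log 2) :=
      (((hW1 x).summable.sub (hbsum x)).mul_left (p x)).div_const _
    have h1 := Summable.tsum_le_tsum hpt hlhs_sum ((hFsum x).sub (hF'sum x))
    have h2 : ∑' y, p x * (W x y - V x (f y) * outDist W p y / outDist V p (f y)) /
        Real.log 2 = p x * (1 - ∑' y, V x (f y) * outDist W p y / outDist V p (f y)) /
        Real.log 2 := by
      rw [tsum_div_const, tsum_mul_left, Summable.tsum_sub (hW1 x).summable (hbsum x),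
        (hW1 x).tsum_eq]
    have h3 : 0 ≤ p x * (1 - ∑' y, V x (f y) * outDist W p y / outDist V p (f y)) /
        Real.log 2 := by
      have := hbtsum x
      have h4 : 0 ≤ 1 - ∑' y, V x (f y) * outDist W p y / outDist V p (f y) := by linarith
      exact div_nonneg (mul_nonneg (hp0 x) h4) hlog2.le
    have h5 := Summable.tsum_sub (hFsum x) (hF'sum x)
    rw [h5] at h1
    rw [h2] at h1
    linarith
  -- upper bound pieces
  have hBnn : ∀ x y, 0 ≤ p x * W x y * Real.logb 2 (outDist V p (f y) / outDist W p y) := by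
    intro x y
    by_cases h : p x * W x y = 0
    · rw [h, zero_mul]
    · have hpw : 0 < p x * W x y := lt_of_le_of_ne (hpW0 x y) (Ne.symm h)
      have hqpos : 0 < outDist W p y := lt_of_lt_of_le hpw (hqW x y)
      exact mul_nonneg (hpW0 x y)
        (Real.logb_nonneg one_lt_two ((one_le_div hqpos).mpr (hqr y)))
  have hBle : ∀ x y, p x * W x y * Real.logb 2 (outDist V p (f y) / outDist W p y) ≤
      p x * W x y * Real.logb 2 (outDist V p (f y) / (p x * W x y)) := by
    intro x y
    by_cases h : p x * W x y = 0
    · rw [h, zero_mul, zero_mul]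
    · have hpw : 0 < p x * W x y := lt_of_le_of_ne (hpW0 x y) (Ne.symm h)
      have hqpos : 0 < outDist W p y := lt_of_lt_of_le hpw (hqW x y)
      have hrpos : 0 < outDist V p (f y) := lt_of_lt_of_le hqpos (hqr y)
      have hmono : outDist V p (f y) / outDist W p y ≤ outDist V p (f y) / (p x * W x y) := by
        apply div_le_div_of_nonneg_left hrpos.le hpw (hqW x y)
      exact mul_le_mul_of_nonneg_left
        ((Real.logb_le_logb one_lt_two (div_pos hrpos hqpos) (div_pos hrpos hpw)).mpr hmono)
        (hpW0 x y)
  have hBsum : ∀ x, Summable (fun y =>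
      p x * W x y * Real.logb 2 (outDist V p (f y) / outDist W p y)) := fun x =>
    Summable.of_nonneg_of_le (hBnn x) (hBle x) (hP2 x)
  have hup : ∀ x, ∑' y, p x * W x y * iDen W p x y -
      ∑' y, p x * W x y * Real.logb 2 (V x (f y) / outDist V p (f y)) ≤
      ∑' y, p x * W x y * Real.logb 2 (outDist V p (f y) / outDist W p y) := by
    intro x
    have hpt2 : ∀ y, p x * W x y * iDen W p x y -
        p x * W x y * Real.logb 2 (V x (f y) / outDist V p (f y)) ≤
        p x * W x y * Real.logb 2 (outDist V p (f y) / outDist W p y) := by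
      intro y
      by_cases hx : p x = 0
      · simp [hx]
      by_cases hw : W x y = 0
      · rw [hw]
        simp
      rw [hFdiff x y hx hw]
      have hWpos : 0 < W x y := lt_of_le_of_ne (hW0 x y) (Ne.symm hw)
      have hpw : 0 < p x * W x y := mul_pos (lt_of_le_of_ne (hp0 x) (Ne.symm hx)) hWpos
      have hqpos : 0 < outDist W p y := lt_of_lt_of_le hpw (hqW x y)
      have hVpos : 0 < V x (f y) := lt_of_lt_of_le hWpos (hWV x y)
      have hrpos : 0 < outDist V p (f y) := lt_of_lt_of_le hqpos (hqr y)
      have hbpos : 0 < V x (f y) * outDist W p y / outDist V p (f y) :=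
        div_pos (mul_pos hVpos hqpos) hrpos
      have hmono : W x y / (V x (f y) * outDist W p y / outDist V p (f y)) ≤
          outDist V p (f y) / outDist W p y := by
        rw [div_le_div_iff₀ hbpos hqpos]
        have e1 : outDist V p (f y) * (V x (f y) * outDist W p y / outDist V p (f y)) =
            V x (f y) * outDist W p y := by
          field_simp
        rw [e1]
        exact mul_le_mul_of_nonneg_right (hWV x y) (hq0 y)
      exact mul_le_mul_of_nonneg_left
        ((Real.logb_le_logb one_lt_two (div_pos hWpos hbpos)
          (div_pos hrpos hqpos)).mpr hmono) (hpW0 x y)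
    have := Summable.tsum_le_tsum hpt2 ((hFsum x).sub (hF'sum x)) (hBsum x)
    rw [Summable.tsum_sub (hFsum x) (hF'sum x)] at this
    exact this
  -- upper bound assembly
  have hBswap : ∑ x, ∑' y, p x * W x y * Real.logb 2 (outDist V p (f y) / outDist W p y)
      = ∑' y, outDist W p y * Real.logb 2 (outDist V p (f y) / outDist W p y) := by
    rw [← Summable.tsum_finsetSum (fun x _ => hBsum x)]
    refine tsum_congr fun y => ?_
    rw [← Finset.sum_mul, ← hq_eq]
  have hB' := key_helper (outDist W p) (outDist V p) (outDist V p) hq0 hr0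
    hr1.summable hr1.summable hqr_fiber hqr
  have hBbound : ∑' y, outDist W p y * Real.logb 2 (outDist V p (f y) / outDist W p y) ≤
      Φ + 1 / Real.log 2 := by
    refine le_trans hB'.2 ?_
    rw [hr1.tsum_eq]
    rw [one_mul]
    rw [add_div]
    rw [mul_div_assoc ..]
    rw [div_self (ne_of_gt hlog2)]
    rw [mul_one]
  constructor
  · rw [hMIW, hMIV]
    exact Finset.sum_le_sum fun x _ => hlow x
  · rw [hMIW, hMIV]
    have h6 : ∑ x, ∑' y, p x * W x y * iDen W p x y -
        ∑ x, ∑' z, p x * V x z * iDen V p x z ≤ Φ + 1 / Real.log 2 := by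
      rw [← Finset.sum_sub_distrib]
      calc ∑ x, (∑' y, p x * W x y * iDen W p x y - ∑' z, p x * V x z * iDen V p x z)
          = ∑ x, (∑' y, p x * W x y * iDen W p x y -
              ∑' y, p x * W x y * Real.logb 2 (V x (f y) / outDist V p (f y))) := by
            refine Finset.sum_congr rfl fun x _ => ?_
            rw [htsumF' x]
        _ ≤ ∑ x, ∑' y, p x * W x y * Real.logb 2 (outDist V p (f y) / outDist W p y) :=
            Finset.sum_le_sum fun x _ => hup x
        _ = ∑' y, outDist W p y * Real.logb 2 (outDist V p (f y) / outDist W p y) := hBswap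
        _ ≤ Φ + 1 / Real.log 2 := hBbound
    linarith
end deg
section capsec
variable {X Y Z : Type*} [Fintype X]

private lemma degrade_nonneg (W : X → Y → ℝ) (f : Y → Z) (hW0 : ∀ x y, 0 ≤ W x y)
    (hf : ∀ z, (f ⁻¹' {z}).Finite) : ∀ x z, 0 ≤ degrade W f x z := by
  intro x z
  have he : degrade W f x z = ∑ y ∈ (hf z).toFinset, W x y := tsum_fiber_subtype hf (W x) z
  rw [he]
  exact Finset.sum_nonneg fun y _ => hW0 x y

private lemma degrade_hasSum (W : X → Y → ℝ) (f : Y → Z) (hW1 : ∀ x, HasSum (W x) 1)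
    (hf : ∀ z, (f ⁻¹' {z}).Finite) : ∀ x, HasSum (degrade W f x) 1 := by
  intro x
  apply HasSum.sigma ((Equiv.sigmaPreimageEquiv f).hasSum_iff.mpr (hW1 x))
  intro z
  haveI := (hf z).fintype
  have h := hasSum_fintype (fun c : ↥(f ⁻¹' {z}) => W x ↑c)
  have he : degrade W f x z = ∑ c : ↥(f ⁻¹' {z}), W x ↑c := tsum_fintype _
  rw [he]
  exact h

private lemma bddAbove_MI (W : X → Y → ℝ) (hW0 : ∀ x y, 0 ≤ W x y)
    (hW1 : ∀ x, HasSum (W x) 1) :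
    BddAbove (Set.range fun p : {p : X → ℝ // (∀ x, 0 ≤ p x) ∧ ∑ x, p x = 1} => MI W p.1) := by
  refine ⟨(Fintype.card X) * (2 / Real.log 2), ?_⟩
  rintro v ⟨p, rfl⟩
  exact (MI_pieces W p.1 hW0 hW1 p.2.1 p.2.2).2.2

private lemma iCap_bounds (W : X → Y → ℝ) (f : Y → Z) (Φ : ℝ)
    (hW0 : ∀ x y, 0 ≤ W x y) (hW1 : ∀ x, HasSum (W x) 1)
    (hfib : ∀ z, (f ⁻¹' {z}).Finite ∧ (((f ⁻¹' {z}).ncard : ℝ)) ≤ 2 ^ Φ)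
    (hΦ0 : 0 ≤ Φ) :
    iCap (degrade W f) ≤ iCap W ∧
    iCap W ≤ iCap (degrade W f) + (Φ + 1 / Real.log 2) := by
  have hlog2 : 0 < Real.log 2 := Real.log_pos one_lt_two
  have hf : ∀ z, (f ⁻¹' {z}).Finite := fun z => (hfib z).1
  have hV0 := degrade_nonneg W f hW0 hf
  have hV1 := degrade_hasSum W f hW1 hf
  by_cases hne : Nonempty {p : X → ℝ // (∀ x, 0 ≤ p x) ∧ ∑ x, p x = 1}
  · haveI := hne
    constructor
    · exact ciSup_le fun p => le_ciSup_of_le (bddAbove_MI W hW0 hW1) p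
        (degrade_bounds W f Φ hW0 hW1 hfib hΦ0 p.1 p.2.1 p.2.2).1
    · refine ciSup_le fun p => le_trans
        (degrade_bounds W f Φ hW0 hW1 hfib hΦ0 p.1 p.2.1 p.2.2).2 ?_
      exact add_le_add_left (le_ciSup (bddAbove_MI _ hV0 hV1) p) _
  · haveI : IsEmpty {p : X → ℝ // (∀ x, 0 ≤ p x) ∧ ∑ x, p x = 1} := not_nonempty_iff.mp hne
    rw [iCap, iCap, Real.iSup_of_isEmpty, Real.iSup_of_isEmpty]
    constructor
    · exact le_refl 0
    · have : 0 < 1 / Real.log 2 := by positivity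
      linarith

end capsec

open Filter Asymptotics

theorem iCap_degrade_small_preimage
    {X : Type*} [Fintype X] {Y Z : ℕ → Type*} [∀ n, Countable (Y n)] [∀ n, Countable (Z n)]
    (U : ∀ n, (Fin n → X) → Y n → ℝ) (f : ∀ n, Y n → Z n) (Φ : ℕ → ℝ)
    (hU0 : ∀ n x y, 0 ≤ U n x y) (hU1 : ∀ n x, HasSum (U n x) 1)
    (hfib : ∀ n (z : Z n), (f n ⁻¹' {z}).Finite ∧ (((f n ⁻¹' {z}).ncard : ℝ)) ≤ 2 ^ Φ n)
    (hΦ : Φ =o[atTop] (fun n => (n : ℝ)))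
    (IU : ℝ)
    (hlim : Tendsto (fun n => iCap (U n) / n) atTop (nhds IU)) :
    Tendsto (fun n => iCap (degrade (U n) (f n)) / n) atTop (nhds IU) := by
  have hlog2 : 0 < Real.log 2 := Real.log_pos one_lt_two
  by_cases hX : Nonempty X
  · have hΦ0 : ∀ n, 0 ≤ Φ n := by
      intro n
      have hx : Nonempty (Fin n → X) := ⟨fun _ => Classical.arbitrary X⟩
      have hy : Nonempty (Y n) := by
        by_contra h
        haveI : IsEmpty (Y n) := not_nonempty_iff.mp h
        have h1 := hU1 n (Classical.arbitrary _)
        have h2 : (1 : ℝ) = 0 := h1.unique hasSum_empty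
        norm_num at h2
      obtain ⟨y0⟩ := hy
      have hfin := (hfib n (f n y0)).1
      have hpos : 0 < (f n ⁻¹' {f n y0}).ncard := (Set.ncard_pos hfin).mpr ⟨y0, rfl⟩
      have h1 : (1:ℝ) ≤ 2 ^ Φ n := by
        refine le_trans ?_ (hfib n (f n y0)).2
        exact_mod_cast hpos
      by_contra h
      push_neg at h
      have := Real.rpow_lt_one_of_one_lt_of_neg one_lt_two h
      linarith
    have hkey : ∀ n, iCap (degrade (U n) (f n)) ≤ iCap (U n) ∧
        iCap (U n) ≤ iCap (degrade (U n) (f n)) + (Φ n + 1 / Real.log 2) :=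
      fun n => iCap_bounds (U n) (f n) (Φ n) (hU0 n) (hU1 n) (hfib n) (hΦ0 n)
    have hdiff : Tendsto (fun n => iCap (degrade (U n) (f n)) / n - iCap (U n) / n)
        atTop (nhds 0) := by
      apply squeeze_zero_norm' (a := fun n => (Φ n + 1 / Real.log 2) / n)
      · filter_upwards [eventually_ge_atTop 1] with n hn
        have hnpos : (0:ℝ) < n := by exact_mod_cast hn
        have h1 := (hkey n).1
        have h2 := (hkey n).2
        have hK : 0 < 1 / Real.log 2 := by positivity
        rw [← sub_div, Real.norm_eq_abs, abs_div, abs_of_pos hnpos]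
        apply div_le_div_of_nonneg_right _ hnpos.le
        rw [abs_le]
        constructor
        · linarith
        · linarith [hΦ0 n]
      · have h1 := hΦ.tendsto_div_nhds_zero
        have h2 := tendsto_const_div_atTop_nhds_zero_nat (1 / Real.log 2)
        have h3 := h1.add h2
        simp only [add_zero] at h3
        exact h3.congr fun n => (add_div _ _ _).symm
    have h4 := hdiff.add hlim
    simp only [zero_add] at h4
    exact h4.congr fun n => by ring
  · haveI : IsEmpty X := not_nonempty_iff.mp hX
    have hempty : ∀ n, 1 ≤ n →
        IsEmpty {p : (Fin n → X) → ℝ // (∀ x, 0 ≤ p x) ∧ ∑ x, p x = 1} := by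
      intro n hn
      haveI : IsEmpty (Fin n → X) := ⟨fun g => IsEmpty.false (g ⟨0, hn⟩)⟩
      constructor
      rintro ⟨p, hp0, hp1⟩
      rw [Finset.univ_eq_empty, Finset.sum_empty] at hp1
      norm_num at hp1
    have hU0' : ∀ᶠ n in atTop, iCap (U n) / (n:ℝ) = 0 := by
      filter_upwards [eventually_ge_atTop 1] with n hn
      haveI := hempty n hn
      rw [iCap, Real.iSup_of_isEmpty, zero_div]
    have hV0' : ∀ᶠ n in atTop, iCap (degrade (U n) (f n)) / (n:ℝ) = 0 := by
      filter_upwards [eventually_ge_atTop 1] with n hn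
      haveI := hempty n hn
      rw [iCap, Real.iSup_of_isEmpty, zero_div]
    have hUz : Tendsto (fun n => iCap (U n) / (n:ℝ)) atTop (nhds 0) :=
      Tendsto.congr' (EventuallyEq.symm hU0') tendsto_const_nhds
    have hIU : IU = 0 := tendsto_nhds_unique hlim hUz
    rw [hIU]
    exact Tendsto.congr' (EventuallyEq.symm hV0') tendsto_const_nhds
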